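/- (Change of measure for shifted exponential partial sums.) Let (E_i)_{i≥1} be i.i.d. exponential random variables with mean 1 and Γ_n := Σ_{i=1}^n E_i. Then for every r ∈ ℕ and every measurable function f : (0,∞)^ℕ → [0,∞], E[ f(Γ_{r+1}, Γ_{r+2}, Γ_{r+3}, …) ] = E[ (Γ₁^r / r!) f(Γ₁, Γ₂, Γ₃, …) ]. -/

import Mathlib

open MeasureTheory Set Finset ProbabilityTheory
open scoped ENNReal


noncomputable def SEw (r : ℕ) (x : ℝ) : ℝ≥0∞ := ENNReal.ofReal (x ^ r / r.factorial)

lemma SEw_meas (r : ℕ) : Measurable (SEw r) :=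
  ((measurable_id.pow_const r).div_const _).ennreal_ofReal

noncomputable def SEpdf : ℝ → ℝ≥0∞ := gammaPDF 1 1

lemma SEpdf_meas : Measurable SEpdf := (measurable_gammaPDFReal 1 1).ennreal_ofReal

lemma SEpdf_of_nonneg {x : ℝ} (hx : 0 ≤ x) : SEpdf x = ENNReal.ofReal (Real.exp (-x)) := by
  rw [SEpdf, gammaPDF_of_nonneg hx]
  norm_num [Real.Gamma_one]

lemma SEpdf_of_neg {x : ℝ} (hx : x < 0) : SEpdf x = 0 := gammaPDF_of_neg hx

lemma SEexp_eq : expMeasure 1 = volume.withDensity SEpdf := rfl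

noncomputable def SEg (r : ℕ) : Measure ℝ := (expMeasure 1).withDensity (SEw r)

lemma SEg_zero : SEg 0 = expMeasure 1 := by
  have : SEw 0 = 1 := by
    funext x; simp [SEw]
  rw [SEg, this, withDensity_one]

lemma SEkernel (r : ℕ) (s : ℝ) :
    ∫⁻ x, SEpdf x * SEw r x * SEpdf (s - x) = SEpdf s * SEw (r + 1) s := by
  rcases lt_or_ge s 0 with hs | hs
  · have h0 : ∀ x : ℝ, SEpdf x * SEw r x * SEpdf (s - x) = 0 := by
      intro x
      rcases lt_or_ge x 0 with hx | hx
      · rw [SEpdf_of_neg hx, zero_mul, zero_mul]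
      · rw [SEpdf_of_neg (by linarith : s - x < 0), mul_zero]
    simp only [h0, lintegral_zero, SEpdf_of_neg hs, zero_mul]
  · have h0 : (fun x => SEpdf x * SEw r x * SEpdf (s - x))
        = (Icc (0:ℝ) s).indicator
            (fun x => ENNReal.ofReal (x ^ r * (Real.exp (-s) / r.factorial))) := by
      funext x
      rcases lt_or_ge x 0 with hx | hx
      · rw [Set.indicator_of_notMem (by simp [hx.not_ge] : x ∉ Icc (0:ℝ) s),
          SEpdf_of_neg hx, zero_mul, zero_mul]
      · rcases le_or_gt x s with hxs | hxs
        · have hmem : x ∈ Icc (0:ℝ) s := ⟨hx, hxs⟩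
          rw [Set.indicator_of_mem hmem, SEpdf_of_nonneg hx,
            SEpdf_of_nonneg (by linarith : (0:ℝ) ≤ s - x), SEw,
            ← ENNReal.ofReal_mul (Real.exp_nonneg _),
            ← ENNReal.ofReal_mul (by positivity)]
          congr 1
          rw [show x ^ r * (Real.exp (-s) / r.factorial)
              = x ^ r / r.factorial * (Real.exp (-x) * Real.exp (-(s-x))) by
            rw [← Real.exp_add]; ring_nf]
          ring
        · rw [Set.indicator_of_notMem (by simp [hxs.not_ge] : x ∉ Icc (0:ℝ) s),
            SEpdf_of_neg (by linarith : s - x < 0), mul_zero]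
    rw [h0, lintegral_indicator measurableSet_Icc _]
    have hInt : IntegrableOn (fun x : ℝ => x ^ r * (Real.exp (-s) / r.factorial))
        (Icc (0:ℝ) s) volume :=
      ((continuous_pow r).mul continuous_const).integrableOn_Icc
    have hNonneg : 0 ≤ᵐ[volume.restrict (Icc (0:ℝ) s)]
        fun x : ℝ => x ^ r * (Real.exp (-s) / r.factorial) := by
      refine (ae_restrict_iff' measurableSet_Icc).mpr (ae_of_all _ fun x hx => ?_)
      have := hx.1
      positivity
    rw [← ofReal_integral_eq_lintegral_ofReal hInt hNonneg]
    rw [MeasureTheory.integral_mul_const]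
    rw [integral_Icc_eq_integral_Ioc, ← intervalIntegral.integral_of_le hs, integral_pow]
    rw [SEpdf_of_nonneg hs, SEw, ← ENNReal.ofReal_mul (Real.exp_nonneg _)]
    congr 1
    rw [Nat.factorial_succ]
    have hr : (r.factorial : ℝ) ≠ 0 := Nat.cast_ne_zero.mpr r.factorial_ne_zero
    have hr1 : ((r:ℝ) + 1) ≠ 0 := by positivity
    push_cast
    field_simp
    ring

lemma SEw_eq (r : ℕ) (x : ℝ) : SEw r x = ENNReal.ofReal (x ^ r / r.factorial) := rfl

lemma SEw_ne_top (r : ℕ) (x : ℝ) : SEw r x ≠ ⊤ := ENNReal.ofReal_ne_top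

lemma SEpdf_ne_top (x : ℝ) : SEpdf x ≠ ⊤ := ENNReal.ofReal_ne_top

lemma SEg_def (r : ℕ) : SEg r = (expMeasure 1).withDensity (SEw r) := rfl

lemma SEconv (r : ℕ) :
    Measure.map (fun p : ℝ × ℝ => p.1 + p.2) ((SEg r).prod (expMeasure 1)) = SEg (r + 1) := by
  have hprob : IsProbabilityMeasure (expMeasure 1) := isProbabilityMeasure_expMeasure one_pos
  have key : ∀ g : ℝ → ℝ≥0∞, Measurable g →
      ∫⁻ a, g a ∂(Measure.map (fun p : ℝ × ℝ => p.1 + p.2) ((SEg r).prod (expMeasure 1)))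
        = ∫⁻ a, g a ∂(SEg (r + 1)) := by
    intro g hg
    have hI : Measurable fun x : ℝ => ∫⁻ s, SEpdf (s - x) * g s :=
      Measurable.lintegral_prod_right
        ((SEpdf_meas.comp (measurable_snd.sub measurable_fst)).mul (hg.comp measurable_snd))
    rw [lintegral_map hg measurable_add]
    rw [lintegral_prod (fun z : ℝ × ℝ => g (z.1 + z.2)) (hg.comp measurable_add).aemeasurable]
    have hinner : ∀ x : ℝ, ∫⁻ y, g (x + y) ∂(expMeasure 1)
        = ∫⁻ s, SEpdf (s - x) * g s := by
      intro x
      rw [SEexp_eq, lintegral_withDensity_eq_lintegral_mul _ SEpdf_meas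
        (show Measurable fun y => g (x + y) from hg.comp (measurable_const_add x))]
      have := lintegral_add_right_eq_self (μ := volume) (fun s => SEpdf (s - x) * g s) x
      simp only [add_sub_cancel_right] at this
      rw [← this]
      congr 1
      funext y
      simp [Pi.mul_apply, add_comm x y]
    simp only [hinner]
    rw [SEg, lintegral_withDensity_eq_lintegral_mul _ (SEw_meas r) hI,
      SEexp_eq, lintegral_withDensity_eq_lintegral_mul _ SEpdf_meas (show Measurable ((SEw r) * fun x => ∫⁻ s, SEpdf (s - x) * g s) from (SEw_meas r).mul hI)]
    have hpt : ∀ x : ℝ, (SEpdf * (SEw r * fun x => ∫⁻ s, SEpdf (s - x) * g s)) x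
        = ∫⁻ s, SEpdf x * SEw r x * (SEpdf (s - x) * g s) := by
      intro x
      simp only [Pi.mul_apply]
      rw [← mul_assoc,
        ← lintegral_const_mul' _ _ (ENNReal.mul_ne_top (SEpdf_ne_top x) (SEw_ne_top r x))]
    simp only [hpt]
    have hunc : Measurable (Function.uncurry
        fun x s => SEpdf x * SEw r x * (SEpdf (s - x) * g s)) :=
      ((SEpdf_meas.comp measurable_fst).mul ((SEw_meas r).comp measurable_fst)).mul
        ((SEpdf_meas.comp (measurable_snd.sub measurable_fst)).mul (hg.comp measurable_snd))
    rw [lintegral_lintegral_swap hunc.aemeasurable]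
    have hpt2 : ∀ s : ℝ, ∫⁻ x, SEpdf x * SEw r x * (SEpdf (s - x) * g s)
        = SEpdf s * (SEw (r+1) s * g s) := by
      intro s
      have h1 : ∀ x : ℝ, SEpdf x * SEw r x * (SEpdf (s - x) * g s)
          = (SEpdf x * SEw r x * SEpdf (s - x)) * g s := fun x => by ring
      simp only [h1]
      rw [lintegral_mul_const _ (show Measurable fun x : ℝ => SEpdf x * SEw r x * SEpdf (s - x)
        from (SEpdf_meas.mul (SEw_meas r)).mul
          (SEpdf_meas.comp (measurable_id.const_sub s))), SEkernel r s, mul_assoc]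
    simp only [hpt2]
    rw [SEg, SEexp_eq,
      lintegral_withDensity_eq_lintegral_mul _ (SEw_meas (r+1)) hg,
      lintegral_withDensity_eq_lintegral_mul _ SEpdf_meas (show Measurable ((SEw (r+1)) * g) from (SEw_meas (r+1)).mul hg)]
    simp only [Pi.mul_apply]
  refine Measure.ext fun t ht => ?_
  rw [← lintegral_indicator_one ht, ← lintegral_indicator_one ht,
    key _ (measurable_one.indicator ht)]

noncomputable section

variable {Ω : Type*} [MeasurableSpace Ω] (P : Measure Ω) [IsProbabilityMeasure P]
  (E : ℕ → Ω → ℝ)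

def SEA (k : ℕ) : Ω → ℝ := fun ω => ∑ i ∈ Finset.range k, E i ω
def SED (m : ℕ) : Ω → ℕ → ℝ := fun ω n => E (m + n) ω
def SEPhi : ℝ × (ℕ → ℝ) → ℕ → ℝ := fun p n => p.1 + ∑ i ∈ Finset.range n, p.2 i

variable {P E}

lemma SEA_meas (hE_meas : ∀ i, Measurable (E i)) (k : ℕ) : Measurable (SEA E k) :=
  Finset.measurable_sum _ fun i _ => hE_meas i

lemma SED_meas (hE_meas : ∀ i, Measurable (E i)) (m : ℕ) : Measurable (SED E m) :=
  measurable_pi_lambda _ fun n => hE_meas (m + n)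

lemma SEPhi_meas : Measurable SEPhi :=
  measurable_pi_lambda _ fun n =>
    measurable_fst.add (Finset.measurable_sum _ fun i _ => (measurable_pi_apply i).comp
      measurable_snd)

lemma SEdecomp (m n : ℕ) (ω : Ω) :
    (∑ i ∈ Finset.range (m + n), E i ω) = SEPhi (SEA E m ω, SED E m ω) n :=
  Finset.sum_range_add (fun i => E i ω) m n

lemma SElawA (hE_meas : ∀ i, Measurable (E i))
    (hE_indep : iIndepFun E P)
    (hE_exp : ∀ i, Measure.map (E i) P = expMeasure 1) (k : ℕ) :
    Measure.map (SEA E (k + 1)) P = SEg k := by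
  induction k with
  | zero =>
    have h1 : SEA E 1 = E 0 := by funext ω; simp [SEA]
    rw [h1, hE_exp 0, SEg_zero]
  | succ k ih =>
    have hsum : (∑ j ∈ Finset.range (k + 1), E j) = SEA E (k + 1) := by
      funext ω; simp [SEA, Finset.sum_apply]
    have hind : IndepFun (SEA E (k + 1)) (E (k + 1)) P := by
      rw [← hsum]; exact hE_indep.indepFun_sum_range_succ hE_meas (k + 1)
    have hpair := (indepFun_iff_map_prod_eq_prod_map_map (SEA_meas hE_meas (k + 1)).aemeasurable
      (hE_meas (k + 1)).aemeasurable).mp hind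
    have hcomp : SEA E (k + 1 + 1)
        = (fun p : ℝ × ℝ => p.1 + p.2) ∘ (fun ω => (SEA E (k + 1) ω, E (k + 1) ω)) := by
      funext ω; simp [SEA, Finset.sum_range_succ]
    rw [hcomp, ← Measure.map_map measurable_add
      ((SEA_meas hE_meas (k + 1)).prodMk (hE_meas (k + 1))), hpair, ih, hE_exp, SEconv]

lemma SEindepAD (hE_meas : ∀ i, Measurable (E i))
    (hE_indep : iIndepFun E P) (m : ℕ) :
    IndepFun (SEA E m) (SED E m) P := by
  have hdisj : Disjoint {i : ℕ | i < m} {i : ℕ | m ≤ i} := by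
    rw [Set.disjoint_left]
    intro i hi hi'
    simp only [Set.mem_setOf_eq] at hi hi'
    omega
  have hIndep := indep_iSup_of_disjoint (fun i => measurable_iff_comap_le.mp (hE_meas i))
    hE_indep.iIndep hdisj
  rw [IndepFun_iff_Indep]
  have hDle : MeasurableSpace.comap (SED E m) inferInstance
      ≤ ⨆ i ∈ {i : ℕ | m ≤ i}, MeasurableSpace.comap (E i) inferInstance := by
    have hpi : (inferInstance : MeasurableSpace (ℕ → ℝ))
        = ⨆ n : ℕ, MeasurableSpace.comap (fun b : ℕ → ℝ => b n) inferInstance := rfl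
    rw [hpi, MeasurableSpace.comap_iSup]
    simp only [MeasurableSpace.comap_comp]
    refine iSup_le fun n => ?_
    exact le_iSup₂ (f := fun (i : ℕ) (_ : i ∈ {i : ℕ | m ≤ i}) =>
      MeasurableSpace.comap (E i) inferInstance) (m + n) (Nat.le_add_right m n)
  have hAle : MeasurableSpace.comap (SEA E m) inferInstance
      ≤ ⨆ i ∈ {i : ℕ | i < m}, MeasurableSpace.comap (E i) inferInstance := by
    have hg : Measurable fun v : Fin m → ℝ => ∑ i, v i :=
      Finset.measurable_sum _ fun i _ => measurable_pi_apply i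
    have hcomp : SEA E m = (fun v : Fin m → ℝ => ∑ i, v i) ∘ (fun ω (i : Fin m) => E i ω) := by
      funext ω
      simp only [SEA, Function.comp_apply]
      exact Finset.sum_range fun i => E i ω
    rw [hcomp, ← MeasurableSpace.comap_comp]
    refine le_trans (MeasurableSpace.comap_mono (measurable_iff_comap_le.mp hg)) ?_
    have hpi : (MeasurableSpace.pi : MeasurableSpace (Fin m → ℝ))
        = ⨆ n : Fin m, MeasurableSpace.comap (fun b : Fin m → ℝ => b n) inferInstance := rfl
    rw [hpi, MeasurableSpace.comap_iSup]
    simp only [MeasurableSpace.comap_comp]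
    refine iSup_le fun i => ?_
    exact le_iSup₂ (f := fun (j : ℕ) (_ : j ∈ {j : ℕ | j < m}) =>
      MeasurableSpace.comap (E j) inferInstance) (i : ℕ) i.isLt
  exact indep_of_indep_of_le_left (indep_of_indep_of_le_right hIndep hDle) hAle

lemma SEmarg (hE_meas : ∀ i, Measurable (E i))
    (hE_indep : iIndepFun E P)
    (hE_exp : ∀ i, Measure.map (E i) P = expMeasure 1) (m : ℕ) (s : Finset ℕ) :
    Measure.map (fun ω (i : s) => E (m + ↑i) ω) P = Measure.pi (fun _ : s => expMeasure 1) := by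
  haveI : IsProbabilityMeasure (expMeasure 1) := isProbabilityMeasure_expMeasure one_pos
  classical
  have hmeas : Measurable fun ω (i : s) => E (m + ↑i) ω :=
    measurable_pi_lambda _ fun i => hE_meas _
  refine (Measure.pi_eq fun A hA => ?_).symm
  rw [Measure.map_apply hmeas (MeasurableSet.univ_pi hA)]
  set B : ℕ → Set ℝ := fun j => if h : m ≤ j ∧ j - m ∈ s then A ⟨j - m, h.2⟩ else Set.univ
    with hB
  have hBmeas : ∀ j, MeasurableSet (B j) := by
    intro j; rw [hB]; dsimp only; split_ifs with h
    · exact hA _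
    · exact MeasurableSet.univ
  have hBval : ∀ (i : ℕ) (hi : i ∈ s), B (m + i) = A ⟨i, hi⟩ := by
    intro i hi
    have h2 : m + i - m = i := by omega
    rw [hB]; dsimp only
    rw [dif_pos ⟨Nat.le_add_right m i, by rw [h2]; exact hi⟩]
    exact congrArg A (Subtype.ext h2)
  have hset : (fun ω (i : s) => E (m + ↑i) ω) ⁻¹' (Set.pi Set.univ A)
      = ⋂ j ∈ s.image (fun i => m + i), E j ⁻¹' B j := by
    ext ω
    simp only [Set.mem_preimage, Set.mem_pi, Set.mem_univ, forall_true_left, Set.mem_iInter,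
      Finset.mem_image]
    constructor
    · rintro h j ⟨i, hi, rfl⟩
      rw [hBval i hi]
      exact h ⟨i, hi⟩
    · intro h i
      have := h (m + ↑i) ⟨↑i, i.2, rfl⟩
      rwa [hBval ↑i i.2] at this
  rw [hset, hE_indep.measure_inter_preimage_eq_mul _ (fun j _ => hBmeas j),
    Finset.prod_image (by intro a _ b _ h; simp only at h; omega)]
  have h1 : ∀ i ∈ s.attach, P (E (m + ↑i) ⁻¹' B (m + ↑i)) = (expMeasure 1) (A i) := by
    intro i _
    rw [hBval ↑i i.2, ← hE_exp (m + ↑i), Measure.map_apply (hE_meas _) (hA i)]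
  exact (Finset.prod_attach s fun j => P (E (m + j) ⁻¹' B (m + j))).symm.trans
    (Finset.prod_congr rfl h1)

lemma SElawD (hE_meas : ∀ i, Measurable (E i))
    (hE_indep : iIndepFun E P)
    (hE_exp : ∀ i, Measure.map (E i) P = expMeasure 1) (m : ℕ) :
    Measure.map (SED E m) P = Measure.map (SED E 1) P := by
  haveI h1 : IsProbabilityMeasure (Measure.map (SED E m) P) :=
    Measure.isProbabilityMeasure_map (SED_meas hE_meas m).aemeasurable
  haveI h2 : IsProbabilityMeasure (Measure.map (SED E 1) P) :=
    Measure.isProbabilityMeasure_map (SED_meas hE_meas 1).aemeasurable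
  refine ext_of_generate_finite (measurableCylinders (fun _ : ℕ => ℝ))
    (generateFrom_measurableCylinders (α := fun _ : ℕ => ℝ)).symm
    (isPiSystem_measurableCylinders (α := fun _ : ℕ => ℝ)) (fun t ht => ?_) ?_
  · obtain ⟨s, S, hS, rfl⟩ := (mem_measurableCylinders t).mp ht
    have hcylm : MeasurableSet (cylinder s S) := MeasurableSet.cylinder (α := fun _ : ℕ => ℝ) s hS
    rw [Measure.map_apply (SED_meas hE_meas m) hcylm,
      Measure.map_apply (SED_meas hE_meas 1) hcylm]
    have hpre : ∀ k : ℕ, SED E k ⁻¹' cylinder s S = (fun ω (i : s) => E (k + ↑i) ω) ⁻¹' S :=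
      fun k => rfl
    have hmeas' : ∀ k : ℕ, Measurable fun ω (i : s) => E (k + ↑i) ω :=
      fun k => measurable_pi_lambda _ fun i => hE_meas _
    rw [hpre m, hpre 1, ← Measure.map_apply (hmeas' m) hS, ← Measure.map_apply (hmeas' 1) hS,
      SEmarg hE_meas hE_indep hE_exp m s, SEmarg hE_meas hE_indep hE_exp 1 s]
  · simp

end

/-- Change of measure for shifted exponential partial sums: with `Γ_n` the partial sums of
i.i.d. standard exponentials, `E[f(Γ_{r+1}, Γ_{r+2}, …)] = E[(Γ₁^r/r!) f(Γ₁, Γ₂, …)]`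
for every measurable nonnegative `f`. -/
theorem change_of_measure_shifted_exponential_sums
    {Ω : Type*} [MeasurableSpace Ω] (P : Measure Ω) [IsProbabilityMeasure P]
    (E : ℕ → Ω → ℝ)
    (hE_meas : ∀ i, Measurable (E i))
    (hE_indep : iIndepFun E P)
    (hE_exp : ∀ i, Measure.map (E i) P = expMeasure 1)
    (G : ℕ → Ω → ℝ) (hG : ∀ n ω, G n ω = ∑ i ∈ Finset.range n, E i ω)
    (r : ℕ)
    (f : (ℕ → ℝ) → ℝ≥0∞) (hf : Measurable f) :
    ∫⁻ ω, f (fun n => G (r + n + 1) ω) ∂P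
      = ∫⁻ ω, ENNReal.ofReal (G 1 ω ^ r / r.factorial) * f (fun n => G (n + 1) ω) ∂P := by
  haveI hexp : IsProbabilityMeasure (expMeasure 1) := isProbabilityMeasure_expMeasure one_pos
  set ν : Measure (ℕ → ℝ) := Measure.map (SED E 1) P with hν
  haveI hνprob : IsProbabilityMeasure ν := Measure.isProbabilityMeasure_map (SED_meas hE_meas 1).aemeasurable
  have hfΦ : Measurable fun p : ℝ × (ℕ → ℝ) => f (SEPhi p) := hf.comp SEPhi_meas
  have hdec : ∀ (m n : ℕ) (ω : Ω), G (m + n) ω = SEPhi (SEA E m ω, SED E m ω) n := by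
    intro m n ω; rw [hG]; exact SEdecomp m n ω
  have hG1 : ∀ ω, G 1 ω = SEA E 1 ω := fun ω => hG 1 ω
  have hmapr := (indepFun_iff_map_prod_eq_prod_map_map (SEA_meas hE_meas (r+1)).aemeasurable
      (SED_meas hE_meas (r+1)).aemeasurable).mp (SEindepAD hE_meas hE_indep (r+1))
  have hmap1 := (indepFun_iff_map_prod_eq_prod_map_map (SEA_meas hE_meas 1).aemeasurable
      (SED_meas hE_meas 1).aemeasurable).mp (SEindepAD hE_meas hE_indep 1)
  calc ∫⁻ ω, f (fun n => G (r + n + 1) ω) ∂P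
      = ∫⁻ ω, (fun p : ℝ × (ℕ → ℝ) => f (SEPhi p)) ((SEA E (r+1) ω, SED E (r+1) ω)) ∂P := by
        refine lintegral_congr fun ω => congrArg f ?_
        funext n
        rw [show r + n + 1 = (r + 1) + n by omega, hdec]
    _ = ∫⁻ p, f (SEPhi p) ∂(Measure.map (fun ω => (SEA E (r+1) ω, SED E (r+1) ω)) P) :=
        (lintegral_map hfΦ ((SEA_meas hE_meas (r+1)).prodMk (SED_meas hE_meas (r+1)))).symm
    _ = ∫⁻ p, f (SEPhi p) ∂((SEg r).prod ν) := by
        rw [hmapr, SElawA hE_meas hE_indep hE_exp r, SElawD hE_meas hE_indep hE_exp (r+1)]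
    _ = ∫⁻ p : ℝ × (ℕ → ℝ), SEw r p.1 * f (SEPhi p) ∂((expMeasure 1).prod ν) := by
        have hI : Measurable fun x : ℝ => ∫⁻ y, f (SEPhi (x, y)) ∂ν :=
          Measurable.lintegral_prod_right hfΦ
        rw [lintegral_prod (fun p : ℝ × (ℕ → ℝ) => f (SEPhi p)) hfΦ.aemeasurable,
          lintegral_prod (fun p : ℝ × (ℕ → ℝ) => SEw r p.1 * f (SEPhi p))
            (((SEw_meas r).comp measurable_fst).mul hfΦ).aemeasurable,
          SEg_def, lintegral_withDensity_eq_lintegral_mul _ (SEw_meas r) hI]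
        refine lintegral_congr fun x => ?_
        simp only [Pi.mul_apply]
        rw [← lintegral_const_mul' _ _ (SEw_ne_top r x)]
    _ = ∫⁻ p : ℝ × (ℕ → ℝ), SEw r p.1 * f (SEPhi p)
          ∂(Measure.map (fun ω => (SEA E 1 ω, SED E 1 ω)) P) := by
        rw [hmap1, SElawA hE_meas hE_indep hE_exp 0, SEg_zero]
    _ = ∫⁻ ω, SEw r (SEA E 1 ω) * f (SEPhi (SEA E 1 ω, SED E 1 ω)) ∂P :=
        lintegral_map (((SEw_meas r).comp measurable_fst).mul hfΦ)
          ((SEA_meas hE_meas 1).prodMk (SED_meas hE_meas 1))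
    _ = ∫⁻ ω, ENNReal.ofReal (G 1 ω ^ r / r.factorial) * f (fun n => G (n + 1) ω) ∂P := by
        refine lintegral_congr fun ω => ?_
        rw [SEw_eq, hG1 ω]
        congr 2
        funext n
        rw [show n + 1 = 1 + n by omega, hdec]
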